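/- arXiv:2008.06851 — 2 statements merged into one kernel-verified Lean document; each statement's English description precedes it below -/
import Mathlib

section
/- Let p, n be positive integers with 1 ≤ n < p, and κ ≥ 1 a real number. Let S be a symmetric p×p real matrix with spectral decomposition S = U · diag(λ̂₁,…,λ̂_p) · Uᵀ, where U is orthogonal, λ̂₁ ≥ ⋯ ≥ λ̂_n > 0 and λ̂_{n+1} = ⋯ = λ̂_p = 0. Then there exist integers α, β with 1 ≤ α < β ≤ n+1 such that, setting μ* := (κ·Σ_{i=1}^{α} λ̂ᵢ + Σ_{i=β}^{n} λ̂ᵢ) / (α·κ² + p − β + 1) and Λ* := diag(λ*₁,…,λ*_p) with λ*ᵢ = κ·μ* for 1 ≤ i ≤ α, λ*ᵢ = λ̂ᵢ for α < i < β, and λ*ᵢ = μ* for β ≤ i ≤ p, the matrix Σ̂ := U Λ* Uᵀ belongs to F(κ) and minimizes ‖Σ − S‖_F over all Σ ∈ F(κ). -/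
open Matrix

/-- The largest eigenvalue of a (symmetric) real matrix, as the supremum of its spectrum. -/
noncomputable def lamMax {p : ℕ} (A : Matrix (Fin p) (Fin p) ℝ) : ℝ := sSup (spectrum ℝ A)

/-- The smallest eigenvalue of a (symmetric) real matrix, as the infimum of its spectrum. -/
noncomputable def lamMin {p : ℕ} (A : Matrix (Fin p) (Fin p) ℝ) : ℝ := sInf (spectrum ℝ A)

/-- The Frobenius norm of a real matrix. -/
noncomputable def frobNorm {p : ℕ} (A : Matrix (Fin p) (Fin p) ℝ) : ℝ :=
  Real.sqrt (∑ i, ∑ j, (A i j) ^ 2)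

section Aux

open Finset

/-- membership in a downward-closed subset of `Fin p` is equivalent to being below its card. -/
private lemma prefix_mem_iff {p : ℕ} (s : Finset (Fin p))
    (hdc : ∀ i j : Fin p, i ≤ j → j ∈ s → i ∈ s) (i : Fin p) :
    i ∈ s ↔ (i : ℕ) < s.card := by
  constructor
  · intro hi
    have hsub : Finset.Iic i ⊆ s := fun j hj => hdc j i (Finset.mem_Iic.mp hj) hi
    have := Finset.card_le_card hsub
    rw [Fin.card_Iic] at this
    omega
  · intro hi
    by_contra hns
    have hsub : s ⊆ Finset.Iio i := by
      intro j hj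
      rcases lt_or_ge j i with h | h
      · exact Finset.mem_Iio.mpr h
      · exact absurd (hdc i j h hj) hns
    have := Finset.card_le_card hsub
    rw [Fin.card_Iio] at this
    omega

private lemma sumsq_eq_trace {p : ℕ} (A : Matrix (Fin p) (Fin p) ℝ) :
    ∑ i, ∑ j, (A i j) ^ 2 = Matrix.trace (A * Aᵀ) := by
  simp [Matrix.trace, Matrix.mul_apply, Matrix.diag, sq]

/-- Frobenius (squared) norm is invariant under orthogonal conjugation. -/
private lemma frobSq_conj {p : ℕ} (V C : Matrix (Fin p) (Fin p) ℝ)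
    (h1 : Vᵀ * V = 1) (h2 : V * Vᵀ = 1) :
    ∑ i, ∑ j, ((Vᵀ * C * V) i j) ^ 2 = ∑ i, ∑ j, (C i j) ^ 2 := by
  clear h1
  rw [sumsq_eq_trace, sumsq_eq_trace]
  have hT : (Vᵀ * C * V)ᵀ = Vᵀ * Cᵀ * V := by
    rw [transpose_mul, transpose_mul, transpose_transpose, Matrix.mul_assoc]
  rw [hT]
  have h3 : Vᵀ * C * V * (Vᵀ * Cᵀ * V) = Vᵀ * ((C * Cᵀ) * V) := by
    calc Vᵀ * C * V * (Vᵀ * Cᵀ * V) = Vᵀ * (C * ((V * Vᵀ) * (Cᵀ * V))) := by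
          simp only [Matrix.mul_assoc]
      _ = Vᵀ * ((C * Cᵀ) * V) := by rw [h2, Matrix.one_mul, Matrix.mul_assoc]
  rw [h3, Matrix.trace_mul_comm, Matrix.mul_assoc, h2, Matrix.mul_one]

/-- Conjugation by an orthogonal matrix preserves positive definiteness. -/
private lemma posdef_conj {p : ℕ} {A : Matrix (Fin p) (Fin p) ℝ} (V : Matrix (Fin p) (Fin p) ℝ)
    (hA : A.PosDef) (h1 : Vᵀ * V = 1) (h2 : V * Vᵀ = 1) : (V * A * Vᵀ).PosDef := by
  clear h1
  refine Matrix.posDef_iff_dotProduct_mulVec.mpr ⟨?_, ?_⟩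
  · have hAh : Aᵀ = A := by
      have := hA.1
      rwa [Matrix.IsHermitian, Matrix.conjTranspose_eq_transpose_of_trivial] at this
    show (V * A * Vᵀ)ᴴ = _
    rw [Matrix.conjTranspose_eq_transpose_of_trivial, transpose_mul, transpose_mul,
      transpose_transpose, hAh, Matrix.mul_assoc]
  · intro x hx
    have hx' : Vᵀ *ᵥ x ≠ 0 := by
      intro h
      apply hx
      have hxx : V *ᵥ (Vᵀ *ᵥ x) = x := by rw [Matrix.mulVec_mulVec, h2, Matrix.one_mulVec]
      rw [h, Matrix.mulVec_zero] at hxx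
      exact hxx.symm
    have hpos := (Matrix.posDef_iff_dotProduct_mulVec.mp hA).2 hx'
    have hrw : star x ⬝ᵥ ((V * A * Vᵀ) *ᵥ x) = star (Vᵀ *ᵥ x) ⬝ᵥ (A *ᵥ (Vᵀ *ᵥ x)) := by
      simp only [star_trivial]
      calc x ⬝ᵥ ((V * A * Vᵀ) *ᵥ x) = x ⬝ᵥ (V *ᵥ ((A * Vᵀ) *ᵥ x)) := by
            rw [Matrix.mulVec_mulVec, Matrix.mul_assoc]
        _ = (x ᵥ* V) ⬝ᵥ ((A * Vᵀ) *ᵥ x) := by rw [Matrix.dotProduct_mulVec]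
        _ = (Vᵀ *ᵥ x) ⬝ᵥ ((A * Vᵀ) *ᵥ x) := by rw [← Matrix.mulVec_transpose]
        _ = (Vᵀ *ᵥ x) ⬝ᵥ (A *ᵥ (Vᵀ *ᵥ x)) := by rw [← Matrix.mulVec_mulVec]
    rw [hrw]
    exact hpos

/-- Spectrum is invariant under orthogonal conjugation. -/
private lemma spectrum_conj {p : ℕ} (V A : Matrix (Fin p) (Fin p) ℝ)
    (h1 : Vᵀ * V = 1) (h2 : V * Vᵀ = 1) :
    spectrum ℝ (V * A * Vᵀ) = spectrum ℝ A := by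
  have hV : V ∈ unitary (Matrix (Fin p) (Fin p) ℝ) := by
    rw [Unitary.mem_iff]
    constructor
    · rw [Matrix.star_eq_conjTranspose, Matrix.conjTranspose_eq_transpose_of_trivial]; exact h1
    · rw [Matrix.star_eq_conjTranspose, Matrix.conjTranspose_eq_transpose_of_trivial]; exact h2
  have := Unitary.spectrum_star_right_conjugate (R := ℝ) (a := A)
    (U := (⟨V, hV⟩ : unitary (Matrix (Fin p) (Fin p) ℝ)))
  simpa [Matrix.star_eq_conjTranspose, Matrix.conjTranspose_eq_transpose_of_trivial] using this

/-- diagonal entries of a hermitian matrix lie between the extreme eigenvalues. -/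
private lemma diag_bounds {p : ℕ} {N : Matrix (Fin p) (Fin p) ℝ} (hN : N.IsHermitian) (i : Fin p) :
    lamMin N ≤ N i i ∧ N i i ≤ lamMax N := by
  classical
  have hWW : (hN.eigenvectorUnitary : Matrix (Fin p) (Fin p) ℝ) *
      star (hN.eigenvectorUnitary : Matrix (Fin p) (Fin p) ℝ) = 1 :=
    Matrix.mem_unitaryGroup_iff.mp hN.eigenvectorUnitary.2
  have hsum1 : ∑ k, ((hN.eigenvectorUnitary : Matrix (Fin p) (Fin p) ℝ) i k) ^ 2 = 1 := by
    have h := congrArg (fun X : Matrix (Fin p) (Fin p) ℝ => X i i) hWW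
    simpa [Matrix.mul_apply, Matrix.one_apply, sq, Matrix.star_eq_conjTranspose,
      Matrix.conjTranspose_apply] using h
  have hNdiag : N i i =
      ∑ k, hN.eigenvalues k * ((hN.eigenvectorUnitary : Matrix (Fin p) (Fin p) ℝ) i k) ^ 2 := by
    conv_lhs => rw [hN.spectral_theorem]
    rw [Unitary.conjStarAlgAut_apply, Matrix.mul_apply]
    simp only [Matrix.mul_diagonal, Function.comp_apply, Matrix.star_eq_conjTranspose,
      Matrix.conjTranspose_apply, RCLike.star_def, RCLike.ofReal_real_eq_id, id_eq,
      starRingEnd_apply, star_trivial]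
    apply Finset.sum_congr rfl
    intro k _
    ring
  have hub : ∀ k, hN.eigenvalues k ≤ lamMax N := by
    intro k
    rw [lamMax, hN.spectrum_real_eq_range_eigenvalues]
    exact le_csSup (Set.finite_range _).bddAbove ⟨k, rfl⟩
  have hlb : ∀ k, lamMin N ≤ hN.eigenvalues k := by
    intro k
    rw [lamMin, hN.spectrum_real_eq_range_eigenvalues]
    exact csInf_le (Set.finite_range _).bddBelow ⟨k, rfl⟩
  constructor
  · calc lamMin N = lamMin N * ∑ k, ((hN.eigenvectorUnitary : Matrix (Fin p) (Fin p) ℝ) i k) ^ 2 :=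
          by rw [hsum1, mul_one]
      _ = ∑ k, lamMin N * ((hN.eigenvectorUnitary : Matrix (Fin p) (Fin p) ℝ) i k) ^ 2 := by
          rw [Finset.mul_sum]
      _ ≤ ∑ k, hN.eigenvalues k * ((hN.eigenvectorUnitary : Matrix (Fin p) (Fin p) ℝ) i k) ^ 2 :=
          Finset.sum_le_sum fun k _ => mul_le_mul_of_nonneg_right (hlb k) (sq_nonneg _)
      _ = N i i := hNdiag.symm
  · calc N i i = ∑ k, hN.eigenvalues k * ((hN.eigenvectorUnitary : Matrix (Fin p) (Fin p) ℝ) i k) ^ 2 :=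
          hNdiag
      _ ≤ ∑ k, lamMax N * ((hN.eigenvectorUnitary : Matrix (Fin p) (Fin p) ℝ) i k) ^ 2 :=
          Finset.sum_le_sum fun k _ => mul_le_mul_of_nonneg_right (hub k) (sq_nonneg _)
      _ = lamMax N * ∑ k, ((hN.eigenvectorUnitary : Matrix (Fin p) (Fin p) ℝ) i k) ^ 2 := by
          rw [Finset.mul_sum]
      _ = lamMax N := by rw [hsum1, mul_one]

private lemma pt_ineq1 {κ t s m lh : ℝ} (hiA : κ * t ≤ lh) (hub : m ≤ κ * s) :
    (κ * t - lh) ^ 2 + (2 * (s - t)) * (κ * (κ * t - lh)) ≤ (m - lh) ^ 2 := by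
  nlinarith [sq_nonneg (m - κ * t), mul_nonneg (sub_nonneg.mpr hiA) (sub_nonneg.mpr hub)]

private lemma pt_ineq2 {t s m lh : ℝ} (hiB : lh ≤ t) (hlb : s ≤ m) :
    (t - lh) ^ 2 + (2 * (s - t)) * (t - lh) ≤ (m - lh) ^ 2 := by
  nlinarith [sq_nonneg (m - t), mul_nonneg (sub_nonneg.mpr hiB) (sub_nonneg.mpr hlb)]

private lemma pt_ineq3 {z m lh : ℝ} : (lh - lh) ^ 2 + z * 0 ≤ (m - lh) ^ 2 := by
  nlinarith [sq_nonneg (m - lh)]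

end Aux

set_option maxHeartbeats 1000000 in
theorem stmt2 {p n : ℕ} (hn : 1 ≤ n) (hnp : n < p) (κ : ℝ) (hκ : 1 ≤ κ)
    (S U : Matrix (Fin p) (Fin p) ℝ) (lamhat : Fin p → ℝ)
    (hSsym : S.IsHermitian)
    (hU : Uᵀ * U = 1)
    (hS : S = U * Matrix.diagonal lamhat * Uᵀ)
    -- λ̂₁ ≥ ⋯ ≥ λ̂_n > 0 and λ̂_{n+1} = ⋯ = λ̂_p = 0 (0-indexed, so that `lamhat i` is λ̂_{i+1}):
    (hanti : ∀ i j : Fin p, i ≤ j → lamhat j ≤ lamhat i)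
    (hpos : ∀ i : Fin p, (i : ℕ) < n → 0 < lamhat i)
    (hzero : ∀ i : Fin p, n ≤ (i : ℕ) → lamhat i = 0) :
    ∃ α β : ℕ, 1 ≤ α ∧ α < β ∧ β ≤ n + 1 ∧
      ∀ (μstar : ℝ) (lamstar : Fin p → ℝ) (Sighat : Matrix (Fin p) (Fin p) ℝ),
        μstar = (κ * (∑ i ∈ Finset.univ.filter (fun i : Fin p => (i : ℕ) + 1 ≤ α), lamhat i)
            + ∑ i ∈ Finset.univ.filter (fun i : Fin p => β ≤ (i : ℕ) + 1 ∧ (i : ℕ) + 1 ≤ n),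
                lamhat i) /
          ((α : ℝ) * κ ^ 2 + (p : ℝ) - (β : ℝ) + 1) →
        lamstar = (fun i : Fin p =>
          if (i : ℕ) + 1 ≤ α then κ * μstar
          else if (i : ℕ) + 1 < β then lamhat i
          else μstar) →
        Sighat = U * Matrix.diagonal lamstar * Uᵀ →
        Sighat.PosDef ∧ lamMax Sighat ≤ κ * lamMin Sighat ∧
          ∀ M : Matrix (Fin p) (Fin p) ℝ, M.PosDef → lamMax M ≤ κ * lamMin M →
            frobNorm (Sighat - S) ≤ frobNorm (M - S) := by
  classical
  have hp : 0 < p := lt_of_le_of_lt (Nat.zero_le n) hnp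
  have hκ0 : (0:ℝ) < κ := lt_of_lt_of_le one_pos hκ
  set i0 : Fin p := ⟨0, hp⟩ with hi0
  set ilast : Fin p := ⟨p - 1, by omega⟩ with hilast
  have hlastn : n ≤ (ilast : ℕ) := by simp only [hilast]; omega
  have hlam0pos : 0 < lamhat i0 := hpos i0 (by simp [hi0]; omega)
  have hlamnonneg : ∀ i, 0 ≤ lamhat i := by
    intro i
    rcases lt_or_ge (i : ℕ) n with h | h
    · exact (hpos i h).le
    · exact (hzero i h).ge
  have hlamle : ∀ i, lamhat i ≤ lamhat i0 := fun i => hanti i0 i (by simp [hi0, Fin.le_def])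
  -- the (half) derivative of the clipping objective, as a function of the threshold t
  set g : ℝ → ℝ :=
    fun t => (∑ i, max (t - lamhat i) 0) - κ * ∑ i, max (lamhat i - κ * t) 0 with hg
  have hgc : Continuous g := by
    apply Continuous.sub
    · exact continuous_finset_sum _ fun i _ =>
        (continuous_id.sub continuous_const).max continuous_const
    · exact continuous_const.mul (continuous_finset_sum _ fun i _ =>
        ((continuous_const.sub (continuous_const.mul continuous_id)).max continuous_const))
  set ε : ℝ := κ * lamhat i0 / ((p : ℝ) + κ ^ 2 + 1) with hε
  have hden : (0:ℝ) < (p : ℝ) + κ ^ 2 + 1 := by positivity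
  have hε0 : 0 < ε := div_pos (mul_pos hκ0 hlam0pos) hden
  have hεeq : ε * ((p : ℝ) + κ ^ 2 + 1) = κ * lamhat i0 := by
    rw [hε]; field_simp
  set T : ℝ := lamhat i0 + 1 with hT
  have hT0 : 0 < T := by rw [hT]; linarith
  have hεT : ε ≤ T := by
    rw [hε, hT, div_le_iff₀ hden]
    nlinarith [mul_le_mul_of_nonneg_right (by nlinarith : κ ≤ κ ^ 2) hlam0pos.le,
      (by positivity : (0:ℝ) ≤ (p:ℝ)), hlam0pos]
  have hgε : g ε < 0 := by
    have b1 : (∑ i, max (ε - lamhat i) 0) ≤ (p : ℝ) * ε := by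
      have hb : ∀ i ∈ Finset.univ, max (ε - lamhat i) 0 ≤ ε := fun i _ =>
        max_le (by linarith [hlamnonneg i]) hε0.le
      calc (∑ i : Fin p, max (ε - lamhat i) 0) ≤ ∑ _i : Fin p, ε := Finset.sum_le_sum hb
        _ = (p : ℝ) * ε := by simp [Finset.sum_const, nsmul_eq_mul]
    have b2 : lamhat i0 - κ * ε ≤ ∑ i, max (lamhat i - κ * ε) 0 := by
      calc lamhat i0 - κ * ε ≤ max (lamhat i0 - κ * ε) 0 := le_max_left _ _
        _ ≤ ∑ i, max (lamhat i - κ * ε) 0 :=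
            Finset.single_le_sum (f := fun i => max (lamhat i - κ * ε) 0)
              (fun i _ => le_max_right _ _) (Finset.mem_univ i0)
    have b2' : κ * (lamhat i0 - κ * ε) ≤ κ * ∑ i, max (lamhat i - κ * ε) 0 :=
      mul_le_mul_of_nonneg_left b2 hκ0.le
    simp only [hg]
    nlinarith
  have hgT : 0 < g T := by
    have hz : ∑ i, max (lamhat i - κ * T) 0 = 0 := Finset.sum_eq_zero fun i _ => by
      have h1 : lamhat i ≤ lamhat i0 := hlamle i
      apply max_eq_right
      nlinarith
    have b1 : T ≤ ∑ i, max (T - lamhat i) 0 := by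
      have hlast : max (T - lamhat ilast) 0 = T := by
        rw [hzero ilast hlastn, sub_zero]
        exact max_eq_left hT0.le
      calc T = max (T - lamhat ilast) 0 := hlast.symm
        _ ≤ ∑ i, max (T - lamhat i) 0 :=
            Finset.single_le_sum (f := fun i => max (T - lamhat i) 0)
              (fun i _ => le_max_right _ _) (Finset.mem_univ ilast)
    simp only [hg]
    rw [hz]
    linarith
  have h0mem : (0:ℝ) ∈ Set.Icc (g ε) (g T) := ⟨hgε.le, hgT.le⟩
  obtain ⟨tstar, htmem, htg⟩ := intermediate_value_Icc hεT hgc.continuousOn h0mem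
  have ht0 : 0 < tstar := lt_of_lt_of_le hε0 htmem.1
  have htκ : tstar ≤ κ * tstar := le_mul_of_one_le_left ht0.le hκ
  have htg' : (∑ i, max (tstar - lamhat i) 0) = κ * ∑ i, max (lamhat i - κ * tstar) 0 := by
    have h := htg
    simp only [hg] at h
    linarith
  -- the index sets
  set A : Finset (Fin p) := Finset.univ.filter (fun i => κ * tstar ≤ lamhat i) with hA
  set B : Finset (Fin p) := Finset.univ.filter (fun i => lamhat i < tstar) with hB
  set α := A.card with hα
  set β := p - B.card + 1 with hβ
  have hBcard : B.card ≤ p := by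
    have := Finset.card_le_univ B
    simpa using this
  have memA : ∀ i : Fin p, i ∈ A ↔ (i : ℕ) < α := by
    apply prefix_mem_iff
    intro i j hij hj
    simp only [hA, Finset.mem_filter, Finset.mem_univ, true_and] at *
    exact le_trans hj (hanti i j hij)
  set C : Finset (Fin p) := Finset.univ.filter (fun i => tstar ≤ lamhat i) with hC
  have hCB : C = Finset.univ \ B := by
    rw [hC, hB]
    ext i
    simp [not_lt]
  have hCcard : C.card = p - B.card := by
    rw [hCB, Finset.card_sdiff_of_subset (Finset.subset_univ B)]
    simp
  have memC : ∀ i : Fin p, i ∈ C ↔ (i : ℕ) < p - B.card := by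
    intro i
    rw [← hCcard]
    apply prefix_mem_iff
    intro i j hij hj
    simp only [hC, Finset.mem_filter, Finset.mem_univ, true_and] at *
    exact le_trans hj (hanti i j hij)
  have memB : ∀ i : Fin p, i ∈ B ↔ β ≤ (i : ℕ) + 1 := by
    intro i
    have h1 : i ∈ B ↔ ¬ (i ∈ C) := by
      rw [hCB]
      simp
    rw [h1, memC i, hβ, not_lt]
    omega
  have memA' : ∀ i : Fin p, κ * tstar ≤ lamhat i ↔ (i : ℕ) < α := by
    intro i
    rw [← memA i, hA]
    simp
  have memB' : ∀ i : Fin p, lamhat i < tstar ↔ β ≤ (i : ℕ) + 1 := by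
    intro i
    rw [← memB i, hB]
    simp
  -- the two sum identities from g tstar = 0
  have S1 : (∑ i, max (tstar - lamhat i) 0) = (B.card : ℝ) * tstar - ∑ i ∈ B, lamhat i := by
    rw [← Finset.sum_filter_add_sum_filter_not Finset.univ (fun i => lamhat i < tstar)
       (fun i => max (tstar - lamhat i) 0), ← hB]
    have h2 : ∑ i ∈ Finset.univ.filter (fun i => ¬ lamhat i < tstar),
        max (tstar - lamhat i) 0 = 0 := by
      apply Finset.sum_eq_zero
      intro i hi
      simp only [Finset.mem_filter, not_lt] at hi
      exact max_eq_right (by linarith [hi.2])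
    have h1 : ∑ i ∈ B, max (tstar - lamhat i) 0 = ∑ i ∈ B, (tstar - lamhat i) := by
      apply Finset.sum_congr rfl
      intro i hi
      simp only [hB, Finset.mem_filter] at hi
      exact max_eq_left (by linarith [hi.2])
    rw [h2, add_zero, h1, Finset.sum_sub_distrib, Finset.sum_const, nsmul_eq_mul]
  have S2 : (∑ i, max (lamhat i - κ * tstar) 0) = ∑ i ∈ A, lamhat i - (α : ℝ) * (κ * tstar) := by
    rw [← Finset.sum_filter_add_sum_filter_not Finset.univ (fun i => κ * tstar ≤ lamhat i)
       (fun i => max (lamhat i - κ * tstar) 0), ← hA]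
    have h2 : ∑ i ∈ Finset.univ.filter (fun i => ¬ κ * tstar ≤ lamhat i),
        max (lamhat i - κ * tstar) 0 = 0 := by
      apply Finset.sum_eq_zero
      intro i hi
      simp only [Finset.mem_filter, not_le] at hi
      exact max_eq_right (by linarith [hi.2])
    have h1 : ∑ i ∈ A, max (lamhat i - κ * tstar) 0 = ∑ i ∈ A, (lamhat i - κ * tstar) := by
      apply Finset.sum_congr rfl
      intro i hi
      simp only [hA, Finset.mem_filter] at hi
      exact max_eq_left (by linarith [hi.2])
    rw [h2, add_zero, h1, Finset.sum_sub_distrib, Finset.sum_const, nsmul_eq_mul, hα]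
  have station : tstar * ((α : ℝ) * κ ^ 2 + (B.card : ℝ))
      = κ * ∑ i ∈ A, lamhat i + ∑ i ∈ B, lamhat i := by
    rw [S1, S2] at htg'
    nlinarith [htg']
  -- α ≥ 1
  have hα1 : 1 ≤ α := by
    rw [hα]
    rw [Nat.one_le_iff_ne_zero, Ne, Finset.card_eq_zero, ← Ne, ← Finset.nonempty_iff_ne_empty]
    by_contra hem
    rw [Finset.not_nonempty_iff_eq_empty] at hem
    have hz2 : ∑ i, max (lamhat i - κ * tstar) 0 = 0 := by
      apply Finset.sum_eq_zero
      intro i _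
      have hiA : i ∉ A := by rw [hem]; exact Finset.notMem_empty i
      rw [hA, Finset.mem_filter] at hiA
      simp only [Finset.mem_univ, true_and, not_le] at hiA
      exact max_eq_right (by linarith)
    have hlhs : tstar ≤ ∑ i, max (tstar - lamhat i) 0 := by
      have hlast : max (tstar - lamhat ilast) 0 = tstar := by
        rw [hzero ilast hlastn, sub_zero]
        exact max_eq_left ht0.le
      calc tstar = max (tstar - lamhat ilast) 0 := hlast.symm
        _ ≤ ∑ i, max (tstar - lamhat i) 0 :=
            Finset.single_le_sum (f := fun i => max (tstar - lamhat i) 0)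
              (fun i _ => le_max_right _ _) (Finset.mem_univ ilast)
    rw [htg', hz2, mul_zero] at hlhs
    linarith
  -- β ≤ n + 1
  have hBlarge : p - n ≤ B.card := by
    have hsub : Finset.univ.filter (fun i : Fin p => ¬ (i : ℕ) < n) ⊆ B := by
      intro i hi
      simp only [Finset.mem_filter, Finset.mem_univ, true_and, not_lt] at hi
      rw [hB, Finset.mem_filter]
      exact ⟨Finset.mem_univ i, by rw [hzero i hi]; exact ht0⟩
    have hEcard : (Finset.univ.filter (fun i : Fin p => (i : ℕ) < n)).card = n := by
      have he : Finset.univ.filter (fun i : Fin p => (i : ℕ) < n)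
          = Finset.Iio (⟨n, hnp⟩ : Fin p) := by
        ext j
        simp [Finset.mem_Iio, Fin.lt_def]
      rw [he, Fin.card_Iio]
    have hDcard : (Finset.univ.filter (fun i : Fin p => ¬ (i : ℕ) < n)).card = p - n := by
      rw [Finset.filter_not, Finset.card_sdiff_of_subset (Finset.filter_subset _ _), hEcard]
      simp
    calc p - n = _ := hDcard.symm
      _ ≤ B.card := Finset.card_le_card hsub
  have hβn : β ≤ n + 1 := by rw [hβ]; omega
  -- α < β
  have hαβ : α < β := by
    have hACsub : A ⊆ C := by
      intro i hi
      rw [hA, Finset.mem_filter] at hi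
      rw [hC, Finset.mem_filter]
      exact ⟨Finset.mem_univ i, by linarith [hi.2]⟩
    have := Finset.card_le_card hACsub
    rw [hCcard, ← hα] at this
    rw [hβ]
    omega
  refine ⟨α, β, hα1, hαβ, hβn, ?_⟩
  intro μstar lamstar Sighat hmu hlsdef hSigdef
  -- μstar equals tstar
  have hsumA : ∑ i ∈ Finset.univ.filter (fun i : Fin p => (i : ℕ) + 1 ≤ α), lamhat i
      = ∑ i ∈ A, lamhat i := by
    apply Finset.sum_congr ?_ (fun _ _ => rfl)
    ext i
    simp only [Finset.mem_filter, Finset.mem_univ, true_and]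
    rw [memA i]
    omega
  have hsumB : ∑ i ∈ Finset.univ.filter (fun i : Fin p => β ≤ (i : ℕ) + 1 ∧ (i : ℕ) + 1 ≤ n),
      lamhat i = ∑ i ∈ B, lamhat i := by
    have hBeq : B = Finset.univ.filter (fun i : Fin p => β ≤ (i : ℕ) + 1) := by
      ext i
      simp only [Finset.mem_filter, Finset.mem_univ, true_and]
      exact memB i
    rw [hBeq]
    apply Finset.sum_subset
    · intro i hi
      simp only [Finset.mem_filter, Finset.mem_univ, true_and] at hi ⊢
      exact hi.1
    · intro i hi hni
      simp only [Finset.mem_filter, Finset.mem_univ, true_and, not_and, not_le] at hi hni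
      exact hzero i (by omega)
  have hβcast : (β : ℝ) = (p : ℝ) - (B.card : ℝ) + 1 := by
    rw [hβ, Nat.cast_add, Nat.cast_sub hBcard, Nat.cast_one]
  have hdenpos : 0 < (α : ℝ) * κ ^ 2 + (B.card : ℝ) := by
    have h1 : (1:ℝ) ≤ (α : ℝ) := by exact_mod_cast hα1
    have h2 : (0:ℝ) ≤ (B.card : ℝ) := Nat.cast_nonneg _
    nlinarith [pow_pos hκ0 2]
  have hμt : μstar = tstar := by
    rw [hmu, hsumA, hsumB]
    have hden2 : (α : ℝ) * κ ^ 2 + (p : ℝ) - (β : ℝ) + 1 = (α : ℝ) * κ ^ 2 + (B.card : ℝ) := by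
      rw [hβcast]; ring
    rw [hden2, div_eq_iff hdenpos.ne']
    linarith [station]
  -- lamstar bounds
  have hlsval : ∀ i : Fin p, lamstar i =
      if (i : ℕ) + 1 ≤ α then κ * tstar else if (i : ℕ) + 1 < β then lamhat i else tstar := by
    intro i
    rw [hlsdef]
    simp only [hμt]
  have hls_lb : ∀ i, tstar ≤ lamstar i := by
    intro i
    rw [hlsval i]
    split_ifs with h1 h2
    · exact htκ
    · have : ¬ (lamhat i < tstar) := by
        rw [memB' i]
        omega
      linarith [not_lt.mp this]
    · exact le_rfl
  have hls_ub : ∀ i, lamstar i ≤ κ * tstar := by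
    intro i
    rw [hlsval i]
    split_ifs with h1 h2
    · exact le_rfl
    · have : ¬ (κ * tstar ≤ lamhat i) := by
        rw [memA' i]
        omega
      linarith [not_le.mp this]
    · exact htκ
  have hls_pos : ∀ i, 0 < lamstar i := fun i => lt_of_lt_of_le ht0 (hls_lb i)
  have hUUT : U * Uᵀ = 1 := mul_eq_one_comm.mp hU
  have hUT1 : (Uᵀ)ᵀ * Uᵀ = 1 := by rw [transpose_transpose]; exact hUUT
  have hUT2 : Uᵀ * (Uᵀ)ᵀ = 1 := by rw [transpose_transpose]; exact hU
  have hSigPD : Sighat.PosDef := by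
    rw [hSigdef]
    exact posdef_conj U (Matrix.posDef_diagonal_iff.mpr hls_pos) hU hUUT
  have hspecSig : spectrum ℝ Sighat = Set.range lamstar := by
    rw [hSigdef, spectrum_conj U _ hU hUUT, spectrum_diagonal]
  have hmaxSig : lamMax Sighat ≤ κ * lamMin Sighat := by
    have h1 : lamMax Sighat ≤ κ * tstar := by
      rw [lamMax, hspecSig]
      apply Real.sSup_le
      · rintro x ⟨i, rfl⟩
        exact hls_ub i
      · positivity
    have h2 : tstar ≤ lamMin Sighat := by
      rw [lamMin, hspecSig]
      refine le_csInf ⟨lamstar i0, ⟨i0, rfl⟩⟩ ?_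
      rintro x ⟨i, rfl⟩
      exact hls_lb i
    calc lamMax Sighat ≤ κ * tstar := h1
      _ ≤ κ * lamMin Sighat := mul_le_mul_of_nonneg_left h2 hκ0.le
  refine ⟨hSigPD, hmaxSig, ?_⟩
  intro M hM hMκ
  set N : Matrix (Fin p) (Fin p) ℝ := Uᵀ * M * U with hN
  have hNposdef : N.PosDef := by
    have h := posdef_conj (A := M) Uᵀ hM hUT1 hUT2
    rwa [transpose_transpose] at h
  have hspecN : spectrum ℝ N = spectrum ℝ M := by
    have h := spectrum_conj Uᵀ M hUT1 hUT2
    rwa [transpose_transpose] at h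
  have hNmax : lamMax N = lamMax M := by rw [lamMax, lamMax, hspecN]
  have hNmin : lamMin N = lamMin M := by rw [lamMin, lamMin, hspecN]
  have hdiagN : ∀ i, lamMin N ≤ N i i ∧ N i i ≤ lamMax N := fun i => diag_bounds hNposdef.1 i
  have hminNpos : 0 < lamMin N := by
    rw [lamMin, hNposdef.1.spectrum_real_eq_range_eigenvalues]
    have hne : (Set.range hNposdef.1.eigenvalues).Nonempty := ⟨_, ⟨i0, rfl⟩⟩
    obtain ⟨k, hk⟩ := hne.csInf_mem (Set.finite_range _)
    rw [← hk]
    exact hNposdef.eigenvalues_pos k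
  have hm1 : ∀ i, 0 < N i i := fun i => lt_of_lt_of_le hminNpos (hdiagN i).1
  have hm2 : ∀ i j, N i i ≤ κ * N j j := by
    intro i j
    calc N i i ≤ lamMax N := (hdiagN i).2
      _ = lamMax M := hNmax
      _ ≤ κ * lamMin M := hMκ
      _ = κ * lamMin N := by rw [hNmin]
      _ ≤ κ * N j j := mul_le_mul_of_nonneg_left (hdiagN j).1 hκ0.le
  -- the key scalar optimality inequality
  have key : ∑ i, (lamstar i - lamhat i) ^ 2 ≤ ∑ i, (N i i - lamhat i) ^ 2 := by
    obtain ⟨j0, _, hj0⟩ := Finset.exists_min_image Finset.univ (fun j => N j j)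
      ⟨i0, Finset.mem_univ i0⟩
    set s := N j0 j0 with hs
    have hms : ∀ i, s ≤ N i i := fun i => hj0 i (Finset.mem_univ i)
    have hmub : ∀ i, N i i ≤ κ * s := fun i => hm2 i j0
    set c : Fin p → ℝ := fun i => if (i : ℕ) + 1 ≤ α then κ * (κ * tstar - lamhat i)
      else if (i : ℕ) + 1 < β then 0 else (tstar - lamhat i) with hc
    have hcsum : ∑ i, c i = 0 := by
      rw [← Finset.sum_filter_add_sum_filter_not Finset.univ
        (fun i : Fin p => (i : ℕ) + 1 ≤ α) c,
        ← Finset.sum_filter_add_sum_filter_not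
          (Finset.univ.filter (fun i : Fin p => ¬ ((i : ℕ) + 1 ≤ α)))
          (fun i : Fin p => (i : ℕ) + 1 < β) c]
      have hAfilter : Finset.univ.filter (fun i : Fin p => (i : ℕ) + 1 ≤ α) = A := by
        ext i
        simp only [Finset.mem_filter, Finset.mem_univ, true_and]
        rw [memA i]
        omega
      have hBfilter : (Finset.univ.filter (fun i : Fin p => ¬ ((i : ℕ) + 1 ≤ α))).filter
          (fun i : Fin p => ¬ ((i : ℕ) + 1 < β)) = B := by
        ext i
        simp only [Finset.mem_filter, Finset.mem_univ, true_and]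
        rw [memB i]
        omega
      have e1 : ∑ i ∈ Finset.univ.filter (fun i : Fin p => (i : ℕ) + 1 ≤ α), c i
          = (α : ℝ) * (κ ^ 2 * tstar) - κ * ∑ i ∈ A, lamhat i := by
        rw [hAfilter]
        have hcongr : ∀ i ∈ A, c i = κ ^ 2 * tstar - κ * lamhat i := by
          intro i hi
          have hiα : (i : ℕ) < α := (memA i).mp hi
          rw [hc]
          simp only [if_pos (by omega : (i : ℕ) + 1 ≤ α)]
          ring
        rw [Finset.sum_congr rfl hcongr, Finset.sum_sub_distrib, Finset.sum_const,
          nsmul_eq_mul, ← Finset.mul_sum, hα]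
      have e2 : ∑ i ∈ (Finset.univ.filter (fun i : Fin p => ¬ ((i : ℕ) + 1 ≤ α))).filter
          (fun i : Fin p => (i : ℕ) + 1 < β), c i = 0 := by
        apply Finset.sum_eq_zero
        intro i hi
        simp only [Finset.mem_filter, Finset.mem_univ, true_and] at hi
        rw [hc]
        simp only [if_neg hi.1, if_pos hi.2]
      have e3 : ∑ i ∈ (Finset.univ.filter (fun i : Fin p => ¬ ((i : ℕ) + 1 ≤ α))).filter
          (fun i : Fin p => ¬ ((i : ℕ) + 1 < β)), c i
          = (B.card : ℝ) * tstar - ∑ i ∈ B, lamhat i := by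
        rw [hBfilter]
        have hcongr : ∀ i ∈ B, c i = tstar - lamhat i := by
          intro i hi
          have hiβ : β ≤ (i : ℕ) + 1 := (memB i).mp hi
          rw [hc]
          simp only [if_neg (by omega : ¬ ((i : ℕ) + 1 ≤ α)),
            if_neg (by omega : ¬ ((i : ℕ) + 1 < β))]
        rw [Finset.sum_congr rfl hcongr, Finset.sum_sub_distrib, Finset.sum_const, nsmul_eq_mul]
      rw [e1, e2, e3]
      linarith [station]
    have hpt : ∀ i ∈ Finset.univ,
        (lamstar i - lamhat i) ^ 2 + (2 * (s - tstar)) * c i ≤ (N i i - lamhat i) ^ 2 := by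
      intro i _
      rw [hlsval i, hc]
      by_cases h1 : (i : ℕ) + 1 ≤ α
      · simp only [if_pos h1]
        have hiA : κ * tstar ≤ lamhat i := (memA' i).mpr (by omega)
        exact pt_ineq1 hiA (hmub i)
      · by_cases h2 : (i : ℕ) + 1 < β
        · simp only [if_neg h1, if_pos h2]
          exact pt_ineq3
        · simp only [if_neg h1, if_neg h2]
          have hiB : lamhat i < tstar := (memB' i).mpr (by omega)
          exact pt_ineq2 hiB.le (hms i)
    have hsum := Finset.sum_le_sum hpt
    rw [Finset.sum_add_distrib, ← Finset.mul_sum, hcsum, mul_zero, add_zero] at hsum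
    exact hsum
  -- Frobenius norm computations
  have hdiagsq : ∀ d : Fin p → ℝ, ∑ i, ∑ j, (Matrix.diagonal d i j) ^ 2 = ∑ i, (d i) ^ 2 := by
    intro d
    apply Finset.sum_congr rfl
    intro i _
    rw [Finset.sum_eq_single i]
    · rw [Matrix.diagonal_apply_eq]
    · intro b _ hb
      rw [Matrix.diagonal_apply_ne d (fun h => hb h.symm)]
      ring
    · intro h
      exact absurd (Finset.mem_univ i) h
  have hfrob1 : frobNorm (Sighat - S)
      = Real.sqrt (∑ i, (lamstar i - lamhat i) ^ 2) := by
    rw [hSigdef, hS]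
    have h1 : U * Matrix.diagonal lamstar * Uᵀ - U * Matrix.diagonal lamhat * Uᵀ
        = (Uᵀ)ᵀ * Matrix.diagonal (fun i => lamstar i - lamhat i) * Uᵀ := by
      rw [transpose_transpose, ← Matrix.diagonal_sub, Matrix.mul_sub, Matrix.sub_mul]
    rw [frobNorm, h1, frobSq_conj Uᵀ _ hUT1 hUT2, hdiagsq]
  have hfrob2 : Real.sqrt (∑ i, ∑ j, ((N - Matrix.diagonal lamhat) i j) ^ 2)
      = frobNorm (M - S) := by
    rw [frobNorm]
    congr 1
    have h1 : N - Matrix.diagonal lamhat = Uᵀ * (M - S) * U := by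
      rw [Matrix.mul_sub, Matrix.sub_mul, hN]
      congr 1
      symm
      rw [hS]
      calc Uᵀ * (U * Matrix.diagonal lamhat * Uᵀ) * U
          = (Uᵀ * U) * (Matrix.diagonal lamhat * (Uᵀ * U)) := by
            simp only [Matrix.mul_assoc]
        _ = Matrix.diagonal lamhat := by rw [hU, Matrix.mul_one, Matrix.one_mul]
    rw [h1, frobSq_conj U _ hU hUUT]
  have hlow : ∑ i, (N i i - lamhat i) ^ 2
      ≤ ∑ i, ∑ j, ((N - Matrix.diagonal lamhat) i j) ^ 2 := by
    apply Finset.sum_le_sum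
    intro i _
    have hdd : (N i i - lamhat i) ^ 2 = ((N - Matrix.diagonal lamhat) i i) ^ 2 := by
      simp [Matrix.sub_apply, Matrix.diagonal_apply_eq]
    rw [hdd]
    exact Finset.single_le_sum (f := fun j => ((N - Matrix.diagonal lamhat) i j) ^ 2)
      (fun j _ => sq_nonneg _) (Finset.mem_univ i)
  rw [hfrob1, ← hfrob2]
  exact Real.sqrt_le_sqrt (le_trans key hlow)
end

section
/- Fix integers 1 ≤ n < p, a real κ ≥ 1, and reals λ̂₁ ≥ ⋯ ≥ λ̂_n > 0 with λ̂_{n+1} = ⋯ = λ̂_p = 0. Let μ* be the unique global minimizer of f over (0, ∞). If there exist integers α, β with 1 ≤ α < β ≤ n+1 such that λ̂_α ≥ κμ* > λ̂_{α+1} and λ̂_{β−1} ≥ μ* > λ̂_β (with the convention λ̂_{n+1} = 0), then μ* = (κ·Σ_{i=1}^{α} λ̂ᵢ + Σ_{i=β}^{n} λ̂ᵢ) / (α·κ² + p − β + 1). -/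
/-- `gfun κ λ̂ μ = (min (max μ λ̂) (κμ) − λ̂)²`. -/
noncomputable def gfun (κ lamh μ : ℝ) : ℝ := (min (max μ lamh) (κ * μ) - lamh) ^ 2

/-- `ffun κ p λ̂ μ = ∑_{i=1}^p gfun κ λ̂ᵢ μ` (1-based indexing of `λ̂`). -/
noncomputable def ffun (κ : ℝ) (p : ℕ) (lamhat : ℕ → ℝ) (μ : ℝ) : ℝ :=
  ∑ i ∈ Finset.Icc 1 p, gfun κ (lamhat i) μ

lemma sqmax (c : ℝ) : HasDerivAt (fun t : ℝ => max t 0 ^ 2) (2 * max c 0) c := by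
  rcases lt_trichotomy c 0 with h | h | h
  · have h0 : HasDerivAt (fun _ : ℝ => (0:ℝ)) 0 c := hasDerivAt_const c 0
    have he : (fun t : ℝ => max t 0 ^ 2) =ᶠ[nhds c] fun _ => (0:ℝ) := by
      filter_upwards [Iio_mem_nhds h] with t ht
      simp [max_eq_right (le_of_lt (Set.mem_Iio.mp ht))]
    have := h0.congr_of_eventuallyEq he
    simpa [max_eq_right h.le] using this
  · subst h
    rw [hasDerivAt_iff_isLittleO]
    have h1 : (fun t : ℝ => max t 0 ^ 2) =O[nhds (0:ℝ)] fun t => t ^ 2 := by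
      apply Asymptotics.IsBigO.of_bound 1
      filter_upwards with t
      have h0 : |max t 0| ≤ |t| := by
        rcases le_total t 0 with ht | ht
        · simp [max_eq_right ht, abs_nonneg]
        · simp [max_eq_left ht]
      simp only [Real.norm_eq_abs, one_mul, abs_pow]
      exact pow_le_pow_left₀ (abs_nonneg _) h0 2
    have h2 : (fun t : ℝ => t ^ 2) =o[nhds (0:ℝ)] fun t => t := by
      have := hasDerivAt_pow 2 (0:ℝ)
      rw [hasDerivAt_iff_isLittleO] at this
      simpa using this
    simpa using h1.trans_isLittleO h2
  · have h0 : HasDerivAt (fun t : ℝ => t ^ 2) (2 * c) c := by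
      simpa using hasDerivAt_pow 2 c
    have he : (fun t : ℝ => max t 0 ^ 2) =ᶠ[nhds c] fun t => t ^ 2 := by
      filter_upwards [Ioi_mem_nhds h] with t ht
      simp [max_eq_left (le_of_lt (Set.mem_Ioi.mp ht))]
    have := h0.congr_of_eventuallyEq he
    simpa [max_eq_left h.le] using this

lemma hq (κ lamh c : ℝ) :
    HasDerivAt (fun μ : ℝ => max (μ - lamh) 0 ^ 2 + max (lamh - κ * μ) 0 ^ 2)
      (2 * max (c - lamh) 0 - 2 * κ * max (lamh - κ * c) 0) c := by
  have h1 : HasDerivAt (fun μ : ℝ => max (μ - lamh) 0 ^ 2) (2 * max (c - lamh) 0) c := by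
    have := (sqmax (c - lamh)).comp c ((hasDerivAt_id c).sub_const lamh)
    simpa [Function.comp_def] using this
  have hin : HasDerivAt (fun μ : ℝ => lamh - κ * μ) (-κ) c := by
    simpa using (hasDerivAt_const c lamh).fun_sub ((hasDerivAt_id c).const_mul κ)
  have h2 := (sqmax (lamh - κ * c)).comp c hin
  have h2' : HasDerivAt (fun μ : ℝ => max (lamh - κ * μ) 0 ^ 2)
      (-(2 * κ * max (lamh - κ * c) 0)) c := by
    have he : 2 * max (lamh - κ * c) 0 * -κ = -(2 * κ * max (lamh - κ * c) 0) := by ring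
    rw [← he]
    simpa [Function.comp_def] using h2
  simpa [sub_eq_add_neg] using h1.fun_add h2'

lemma gfun_eq (κ lamh μ : ℝ) (hκ : 1 ≤ κ) (hl : 0 ≤ lamh) (hμ : 0 < μ) :
    gfun κ lamh μ = max (μ - lamh) 0 ^ 2 + max (lamh - κ * μ) 0 ^ 2 := by
  have hμκ : μ ≤ κ * μ := le_mul_of_one_le_left hμ.le hκ
  unfold gfun
  rcases le_total lamh μ with h | h
  · rw [max_eq_left h, min_eq_left hμκ, max_eq_left (by linarith), max_eq_right (by linarith)]
    ring
  · rw [max_eq_right h]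
    rcases le_total lamh (κ * μ) with h' | h'
    · rw [min_eq_left h', max_eq_right (by linarith), max_eq_right (by linarith)]
      ring
    · rw [min_eq_right h', max_eq_right (by linarith), max_eq_left (by linarith)]
      ring

theorem stmt15 (n p : ℕ) (hn : 1 ≤ n) (hnp : n < p) (κ : ℝ) (hκ : 1 ≤ κ)
    (lamhat : ℕ → ℝ)
    -- λ̂₁ ≥ ⋯ ≥ λ̂_n > 0 and λ̂_{n+1} = ⋯ = λ̂_p = 0:
    (hanti : ∀ i j : ℕ, 1 ≤ i → i ≤ j → j ≤ p → lamhat j ≤ lamhat i)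
    (hpos : ∀ i : ℕ, 1 ≤ i → i ≤ n → 0 < lamhat i)
    (hzero : ∀ i : ℕ, n < i → i ≤ p → lamhat i = 0)
    -- μ* is the unique global minimizer of f over (0, ∞):
    (μstar : ℝ) (hμstar : 0 < μstar)
    (hmin : ∀ μ : ℝ, 0 < μ → ffun κ p lamhat μstar ≤ ffun κ p lamhat μ)
    (huniq : ∀ μ : ℝ, 0 < μ →
      (∀ ν : ℝ, 0 < ν → ffun κ p lamhat μ ≤ ffun κ p lamhat ν) → μ = μstar)
    (α β : ℕ) (hα : 1 ≤ α) (hαβ : α < β) (hβ : β ≤ n + 1)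
    -- λ̂_α ≥ κμ* > λ̂_{α+1} and λ̂_{β−1} ≥ μ* > λ̂_β:
    (h1 : κ * μstar ≤ lamhat α) (h2 : lamhat (α + 1) < κ * μstar)
    (h3 : μstar ≤ lamhat (β - 1)) (h4 : lamhat β < μstar) :
    μstar = (κ * ∑ i ∈ Finset.Icc 1 α, lamhat i + ∑ i ∈ Finset.Icc β n, lamhat i) /
      ((α : ℝ) * κ ^ 2 + (p : ℝ) - (β : ℝ) + 1) := by
  -- basic index facts
  have hβ1 : 1 ≤ β := le_of_lt (lt_of_le_of_lt hα hαβ)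
  have hβp : β ≤ p := le_trans hβ (Nat.succ_le_of_lt hnp)
  have hαn : α ≤ n := by omega
  have hαp : α ≤ p := by omega
  have hβ1n : β - 1 ≤ n := by omega
  have hβ1p : β - 1 ≤ p := by omega
  have hκ0 : (0:ℝ) < κ := lt_of_lt_of_le one_pos hκ
  have hμκ : μstar ≤ κ * μstar := le_mul_of_one_le_left hμstar.le hκ
  have hlnn : ∀ i : ℕ, 1 ≤ i → i ≤ p → 0 ≤ lamhat i := by
    intro i hi hip
    rcases le_or_gt i n with h | h
    · exact (hpos i hi h).le
    · exact (hzero i h hip).ge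
  -- the derivative of each summand at μstar
  set d : ℕ → ℝ := fun i =>
    2 * max (μstar - lamhat i) 0 - 2 * κ * max (lamhat i - κ * μstar) 0 with hd
  -- f has derivative ∑ d at μstar
  have hfd : HasDerivAt (ffun κ p lamhat) (∑ i ∈ Finset.Icc 1 p, d i) μstar := by
    have hsum : HasDerivAt
        (fun μ => ∑ i ∈ Finset.Icc 1 p,
          (max (μ - lamhat i) 0 ^ 2 + max (lamhat i - κ * μ) 0 ^ 2))
        (∑ i ∈ Finset.Icc 1 p, d i) μstar :=
      HasDerivAt.fun_sum fun i _ => hq κ (lamhat i) μstar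
    apply hsum.congr_of_eventuallyEq
    filter_upwards [Ioi_mem_nhds hμstar] with μ hμ
    refine Finset.sum_congr rfl fun i hi => ?_
    rw [Finset.mem_Icc] at hi
    exact gfun_eq κ (lamhat i) μ hκ (hlnn i hi.1 hi.2) (Set.mem_Ioi.mp hμ)
  -- μstar is a local min, so the derivative vanishes
  have hloc : IsLocalMin (ffun κ p lamhat) μstar := by
    filter_upwards [Ioi_mem_nhds hμstar] with μ hμ
    exact hmin μ (Set.mem_Ioi.mp hμ)
  have hD0 : (∑ i ∈ Finset.Icc 1 p, d i) = 0 := hloc.hasDerivAt_eq_zero hfd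
  -- classification of indices
  have hup : ∀ i ∈ Finset.Ioc 0 α, d i = 2 * κ * (κ * μstar - lamhat i) := by
    intro i hi
    rw [Finset.mem_Ioc] at hi
    have hla : κ * μstar ≤ lamhat i := le_trans h1 (hanti i α hi.1 hi.2 hαp)
    rw [hd]
    simp only
    rw [max_eq_right (by linarith), max_eq_left (by linarith)]
    ring
  have hmid : ∀ i ∈ Finset.Ioc α (β - 1), d i = 0 := by
    intro i hi
    rw [Finset.mem_Ioc] at hi
    have hla : lamhat i ≤ lamhat (α + 1) := hanti (α + 1) i (by omega) hi.1 (by omega)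
    have hlb : lamhat (β - 1) ≤ lamhat i := hanti i (β - 1) (by omega) hi.2 hβ1p
    rw [hd]
    simp only
    rw [max_eq_right (by linarith), max_eq_right (by linarith)]
    ring
  have hlow : ∀ i ∈ Finset.Ioc (β - 1) p, d i = 2 * (μstar - lamhat i) := by
    intro i hi
    rw [Finset.mem_Ioc] at hi
    have hib : β ≤ i := by omega
    have hla : lamhat i ≤ lamhat β := hanti β i hβ1 hib hi.2
    rw [hd]
    simp only
    rw [max_eq_left (by linarith), max_eq_right (by linarith)]
    ring
  -- split the sum
  have hIcc : Finset.Icc 1 p = Finset.Ioc 0 p := by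
    rw [← Finset.Icc_add_one_left_eq_Ioc, zero_add]
  have hsplit : (∑ i ∈ Finset.Ioc 0 α, d i) + (∑ i ∈ Finset.Ioc α (β - 1), d i)
      + (∑ i ∈ Finset.Ioc (β - 1) p, d i) = ∑ i ∈ Finset.Icc 1 p, d i := by
    rw [hIcc, Finset.sum_Ioc_consecutive d (Nat.zero_le α) (by omega : α ≤ β - 1),
      Finset.sum_Ioc_consecutive d (by omega : (0:ℕ) ≤ β - 1) hβ1p]
  -- evaluate each piece
  have hA : (∑ i ∈ Finset.Ioc 0 α, d i)
      = (α : ℝ) * (2 * κ ^ 2 * μstar) - 2 * κ * ∑ i ∈ Finset.Icc 1 α, lamhat i := by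
    rw [Finset.sum_congr rfl hup]
    rw [show Finset.Icc 1 α = Finset.Ioc 0 α from by rw [← Finset.Icc_add_one_left_eq_Ioc, zero_add]]
    simp only [mul_sub, Finset.sum_sub_distrib, Finset.sum_const, Finset.mul_sum,
      Nat.card_Ioc, Nat.sub_zero, nsmul_eq_mul]
    ring
  have hB : (∑ i ∈ Finset.Ioc α (β - 1), d i) = 0 := Finset.sum_eq_zero hmid
  have hS2 : (∑ i ∈ Finset.Ioc (β - 1) p, lamhat i) = ∑ i ∈ Finset.Icc β n, lamhat i := by
    rw [← Finset.sum_Ioc_consecutive lamhat hβ1n hnp.le]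
    have hz : (∑ i ∈ Finset.Ioc n p, lamhat i) = 0 := by
      apply Finset.sum_eq_zero
      intro i hi
      rw [Finset.mem_Ioc] at hi
      exact hzero i hi.1 hi.2
    rw [hz, add_zero]
    congr 1
    rw [← Finset.Icc_add_one_left_eq_Ioc]
    congr 1
    omega
  have hC : (∑ i ∈ Finset.Ioc (β - 1) p, d i)
      = ((p - (β - 1) : ℕ) : ℝ) * (2 * μstar) - 2 * ∑ i ∈ Finset.Icc β n, lamhat i := by
    rw [Finset.sum_congr rfl hlow, ← hS2]
    simp only [mul_sub, Finset.sum_sub_distrib, Finset.sum_const, Finset.mul_sum,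
      Nat.card_Ioc, nsmul_eq_mul]
  have hcast : ((p - (β - 1) : ℕ) : ℝ) = (p : ℝ) - (β : ℝ) + 1 := by
    rw [Nat.cast_sub hβ1p, Nat.cast_sub hβ1]
    push_cast
    ring
  -- the vanishing-derivative equation
  have heq : (α : ℝ) * (2 * κ ^ 2 * μstar) - 2 * κ * (∑ i ∈ Finset.Icc 1 α, lamhat i)
      + (((p : ℝ) - (β : ℝ) + 1) * (2 * μstar) - 2 * ∑ i ∈ Finset.Icc β n, lamhat i) = 0 := by
    rw [← hcast, ← hA, ← hC]
    rw [← hD0, ← hsplit, hB]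
    ring
  -- denominator positive
  have hden : (0:ℝ) < (α : ℝ) * κ ^ 2 + (p : ℝ) - (β : ℝ) + 1 := by
    have hα1 : (1:ℝ) ≤ (α : ℝ) := by exact_mod_cast hα
    have hβp' : (β : ℝ) ≤ (p : ℝ) := by exact_mod_cast hβp
    nlinarith
  rw [eq_div_iff (ne_of_gt hden)]
  linear_combination heq / 2
end
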